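/- The Bernoulli-Gaussian denoiser η(a,b) = f(a,b)/(1 + T(a,b)), with f(a,b) = (σ²a + λ²b)/(σ²+λ²+σ²λ²) and T(a,b) = ((1−ε)/ε)·√((σ²+λ²+σ²λ²)/(λ²σ²))·exp(−(σ²a+λ²b)²/(2ν)) where ν = σ²λ²(σ²+λ²+σ²λ²), satisfies |∂η/∂a(a,b)| ≤ 1 + (2/λ)·(1−ε)/ε for all (a,b) ∈ ℝ². -/

import Mathlib

set_option maxHeartbeats 1000000 in
/-- The Bernoulli-Gaussian denoiser η(a,b) = f(a,b)/(1+T(a,b)) satisfies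
|∂η/∂a| ≤ 1 + (2/λ)·(1−ε)/ε. -/
theorem stmt_11 (ε σ l : ℝ) (hε : 0 < ε) (hε1 : ε < 1) (hσ : 0 < σ) (hl : 0 < l) :
    ∀ a b : ℝ,
      |deriv (fun a' : ℝ =>
          ((σ ^ 2 * a' + l ^ 2 * b) / (σ ^ 2 + l ^ 2 + σ ^ 2 * l ^ 2)) /
            (1 + ((1 - ε) / ε) *
              Real.sqrt ((σ ^ 2 + l ^ 2 + σ ^ 2 * l ^ 2) / (l ^ 2 * σ ^ 2)) *
              Real.exp (-(σ ^ 2 * a' + l ^ 2 * b) ^ 2 /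
                (2 * (σ ^ 2 * l ^ 2 * (σ ^ 2 + l ^ 2 + σ ^ 2 * l ^ 2)))))) a| ≤
        1 + 2 / l * ((1 - ε) / ε) := by
  intro a b
  have hS : (0:ℝ) < σ ^ 2 + l ^ 2 + σ ^ 2 * l ^ 2 := by positivity
  set S := σ ^ 2 + l ^ 2 + σ ^ 2 * l ^ 2 with hSdef
  set ν := σ ^ 2 * l ^ 2 * S with hνdef
  have hν : (0:ℝ) < ν := by rw [hνdef]; positivity
  set c0 := (1 - ε) / ε with hc0def
  have hc0 : 0 < c0 := by rw [hc0def]; exact div_pos (by linarith) hε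
  set κ := c0 * Real.sqrt (S / (l ^ 2 * σ ^ 2)) with hκdef
  have hκ : 0 ≤ κ := by rw [hκdef]; positivity
  set E := Real.exp (-(σ ^ 2 * a + l ^ 2 * b) ^ 2 / (2 * ν)) with hEdef
  have hE : 0 < E := Real.exp_pos _
  have h1T : 0 < 1 + κ * E := by positivity
  have hu : HasDerivAt (fun a' : ℝ => σ ^ 2 * a' + l ^ 2 * b) (σ ^ 2) a := by
    simpa using ((hasDerivAt_id a).const_mul (σ ^ 2)).add_const (l ^ 2 * b)
  have hf : HasDerivAt (fun a' : ℝ => (σ ^ 2 * a' + l ^ 2 * b) / S) (σ ^ 2 / S) a :=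
    hu.div_const S
  have hg : HasDerivAt
      (fun a' : ℝ => 1 + κ * Real.exp (-(σ ^ 2 * a' + l ^ 2 * b) ^ 2 / (2 * ν)))
      (-(κ * E * ((σ ^ 2 * a + l ^ 2 * b) * σ ^ 2 / ν))) a := by
    have h1 := (((hu.pow 2).neg).div_const (2 * ν)).exp.const_mul κ |>.const_add 1
    refine h1.congr_deriv ?_
    simp only [Pi.neg_apply, Pi.pow_apply]
    push_cast
    rw [hEdef]
    field_simp
  have hdiv := hf.div hg (ne_of_gt h1T)
  have hd := hdiv.deriv
  simp only [Pi.div_def] at hd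
  rw [hd, ← hEdef]
  set u := σ ^ 2 * a + l ^ 2 * b with hudef
  have hnum : σ ^ 2 / S * (1 + κ * E) - u / S * -(κ * E * (u * σ ^ 2 / ν)) =
      σ ^ 2 / S * (1 + κ * E) + κ * E * u ^ 2 * σ ^ 2 / (S * ν) := by
    field_simp
    ring
  rw [hnum, abs_of_nonneg (by positivity), add_div]
  -- key bound on the second term
  have hσ2S : σ ^ 2 ≤ S := by rw [hSdef]; nlinarith [sq_nonneg l, sq_nonneg (σ * l)]
  have hrs : Real.sqrt (S / (l ^ 2 * σ ^ 2)) = Real.sqrt S / (l * σ) := by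
    rw [show l ^ 2 * σ ^ 2 = (l * σ) ^ 2 by ring, Real.sqrt_div hS.le, Real.sqrt_sq (by positivity)]
  set r := Real.sqrt S with hrdef
  have hr0 : 0 < r := Real.sqrt_pos.2 hS
  have hrr : r * r = S := Real.mul_self_sqrt hS.le
  have hσr : σ ≤ r := by
    calc σ = Real.sqrt (σ ^ 2) := (Real.sqrt_sq hσ.le).symm
    _ ≤ r := Real.sqrt_le_sqrt hσ2S
  have hexp : E * u ^ 2 ≤ 2 * ν := by
    have hx := Real.add_one_le_exp (u ^ 2 / (2 * ν))
    rw [hEdef, neg_div, Real.exp_neg, inv_mul_le_iff₀ (Real.exp_pos _)]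
    have h2 := (div_le_iff₀ (by positivity : (0:ℝ) < 2 * ν)).mp
      (by linarith : u ^ 2 / (2 * ν) ≤ Real.exp (u ^ 2 / (2 * ν)))
    linarith
  have hmain : r * (E * u ^ 2) * σ ≤ S * (2 * ν) := by
    calc r * (E * u ^ 2) * σ = (σ * r) * (E * u ^ 2) := by ring
    _ ≤ S * (2 * ν) := by
        apply mul_le_mul (by nlinarith) hexp (by positivity) hS.le
  have key : κ * E * u ^ 2 * σ ^ 2 / (S * ν) ≤ 2 / l * c0 := by
    rw [hκdef, hrs]
    have expand : c0 * (r / (l * σ)) * E * u ^ 2 * σ ^ 2 / (S * ν) =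
        c0 * (r * (E * u ^ 2) * σ) / (l * (S * ν)) := by
      field_simp
    have rhs : 2 / l * c0 = c0 * (S * (2 * ν)) / (l * (S * ν)) := by
      field_simp
    rw [expand, rhs]
    gcongr
  have h1 : σ ^ 2 / S * (1 + κ * E) / (1 + κ * E) ^ 2 ≤ 1 := by
    rw [div_le_one (by positivity)]
    have hr : σ ^ 2 / S ≤ 1 := (div_le_one hS).2 hσ2S
    nlinarith [mul_nonneg hκ hE.le]
  have h2 : κ * E * u ^ 2 * σ ^ 2 / (S * ν) / (1 + κ * E) ^ 2 ≤ κ * E * u ^ 2 * σ ^ 2 / (S * ν) := by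
    apply div_le_self (by positivity)
    nlinarith [mul_nonneg hκ hE.le]
  linarith
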